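/- Let N ≥ 1, let A be a symmetric N×N complex matrix (Aᵀ = A), a₀ ∈ ℂ^N with |a₀| < 1, and a₁ ∈ ℂ with a₁ ≠ 0. Define ψ(z) = a₁·(1 − ⟨z, ā₀⟩)^{−N} and φ(z) = (a₀ − Az)/(1 − ⟨z, ā₀⟩), and assume φ maps B_N into B_N. Then the identity ψ(z)·(1 − ⟨φ(z), w⟩)^{−N} = conj(ψ(w))·(1 − ⟨z, φ(w)⟩)^{−N} holds for all z,w ∈ B_N if and only if a₁ is a real number, a₀ is a real vector (a₀ ∈ ℝ^N), and A has real entries. -/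

import Mathlib

open ComplexConjugate

/-- The open unit ball of `ℂ^N` (Euclidean norm). -/
def unitBall (N : ℕ) : Set (Fin N → ℂ) := {z | ∑ j, ‖z j‖ ^ 2 < 1}

open Polynomial in
private lemma key_lin (N : ℕ) (hN : 1 ≤ N) (p a c : ℂ) (hp : p ≠ 0)
    (h : ∀ t : ℝ, 0 < t → t < 1/2 → (p + a * t) ^ N = (p + c * t) ^ N) : a = c := by
  have hPQ : ((C p + C a * X : ℂ[X]) ^ N) = (C p + C c * X) ^ N := by
    apply Polynomial.eq_of_infinite_eval_eq
    apply Set.Infinite.mono (s := (fun t : ℝ => (t : ℂ)) '' Set.Ioo 0 (1/2))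
    · rintro x ⟨t, ht, rfl⟩
      simp only [Set.mem_setOf_eq, eval_pow, eval_add, eval_C, eval_mul, eval_X]
      exact h t ht.1 ht.2
    · exact Set.Infinite.image (fun x _ y _ hxy => by exact_mod_cast hxy)
        (Set.Ioo_infinite (by norm_num))
  have hD := congrArg (fun P => Polynomial.eval 0 (Polynomial.derivative P)) hPQ
  simp only [derivative_pow, derivative_add, derivative_C, derivative_mul, derivative_X,
    zero_add, mul_one, mul_zero, eval_mul, eval_pow, eval_add, eval_C, eval_X,
    eval_natCast] at hD
  have hN0 : (N : ℂ) ≠ 0 := Nat.cast_ne_zero.2 (by omega)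
  have hpp : p ^ (N - 1) ≠ 0 := pow_ne_zero _ hp
  field_simp at hD
  exact hD

private lemma zpow_eqN (N : ℕ) {x y : ℂ} (h : x ^ (-(N:ℤ)) = y ^ (-(N:ℤ))) :
    x ^ N = y ^ N := by
  have := congrArg Inv.inv h
  simpa [zpow_neg, inv_inv, zpow_natCast] using this

private lemma zero_mem_ball (N : ℕ) : (0 : Fin N → ℂ) ∈ unitBall N := by
  simp [unitBall]

private lemma single_mem_ball (N : ℕ) (i : Fin N) (t : ℝ) (h0 : 0 < t) (h1 : t < 1) :
    (Pi.single i ((t:ℂ)) : Fin N → ℂ) ∈ unitBall N := by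
  simp only [unitBall, Set.mem_setOf_eq, Pi.single_apply, apply_ite Norm.norm, norm_zero,
    apply_ite (fun r : ℝ => r ^ 2), Complex.norm_real, Real.norm_eq_abs]
  rw [show ((0:ℝ)^2) = 0 by norm_num]
  simp only [Finset.sum_ite_eq', Finset.mem_univ, if_true]
  nlinarith [abs_of_pos h0]

private lemma norm_sum_lt (N : ℕ) (a₀ : Fin N → ℂ)
    (ha₀ : Real.sqrt (∑ j, ‖a₀ j‖ ^ 2) < 1)
    {z : Fin N → ℂ} (hz : z ∈ unitBall N) : ‖∑ j, z j * a₀ j‖ < 1 := by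
  have h1 : ‖∑ j, z j * a₀ j‖ ≤ ∑ j, ‖z j‖ * ‖a₀ j‖ := by
    refine (norm_sum_le _ _).trans_eq ?_
    exact Finset.sum_congr rfl fun j _ => norm_mul _ _
  have h2 : ∑ j, ‖z j‖ * ‖a₀ j‖ ≤
      Real.sqrt (∑ j, ‖z j‖ ^ 2) * Real.sqrt (∑ j, ‖a₀ j‖ ^ 2) :=
    Real.sum_mul_le_sqrt_mul_sqrt _ _ _
  have hz1 : Real.sqrt (∑ j, ‖z j‖ ^ 2) < 1 := by
    rw [show (1:ℝ) = Real.sqrt 1 by simp]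
    exact Real.sqrt_lt_sqrt (Finset.sum_nonneg fun j _ => by positivity) (by simpa [unitBall] using hz)
  nlinarith [Real.sqrt_nonneg (∑ j, ‖z j‖ ^ 2), Real.sqrt_nonneg (∑ j, ‖a₀ j‖ ^ 2)]

private lemma one_sub_ne (N : ℕ) (a₀ : Fin N → ℂ)
    (ha₀ : Real.sqrt (∑ j, ‖a₀ j‖ ^ 2) < 1)
    {z : Fin N → ℂ} (hz : z ∈ unitBall N) : (1:ℂ) - ∑ j, z j * a₀ j ≠ 0 := by
  intro h
  rw [sub_eq_zero] at h
  have := norm_sum_lt N a₀ ha₀ hz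
  rw [← h] at this
  simp at this

private lemma reduce (N : ℕ) {s : ℂ} (x : ℂ) (hs : s ≠ 0) :
    s ^ (-(N:ℤ)) * (x / s) ^ (-(N:ℤ)) = x ^ (-(N:ℤ)) := by
  rw [div_zpow]
  field_simp

theorem stmt_9 (N : ℕ) (hN : 1 ≤ N)
    (A : Matrix (Fin N) (Fin N) ℂ) (hA : A.transpose = A)
    (a₀ : Fin N → ℂ) (ha₀ : Real.sqrt (∑ j, ‖a₀ j‖ ^ 2) < 1)
    (a₁ : ℂ) (ha₁ : a₁ ≠ 0)
    (hmap : ∀ z ∈ unitBall N,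
      (fun i => (a₀ i - A.mulVec z i) / (1 - ∑ j, z j * a₀ j)) ∈ unitBall N) :
    (∀ z ∈ unitBall N, ∀ w ∈ unitBall N,
        (a₁ * (1 - ∑ j, z j * a₀ j) ^ (-(N : ℤ))) *
            (1 - ∑ j, (a₀ j - A.mulVec z j) / (1 - ∑ m, z m * a₀ m) * conj (w j)) ^
              (-(N : ℤ)) =
          conj (a₁ * (1 - ∑ j, w j * a₀ j) ^ (-(N : ℤ))) *
            (1 - ∑ j, z j * conj ((a₀ j - A.mulVec w j) / (1 - ∑ m, w m * a₀ m))) ^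
              (-(N : ℤ))) ↔
      (a₁.im = 0 ∧ (∀ j, (a₀ j).im = 0) ∧ ∀ i j, (A i j).im = 0) := by
  have hsym : ∀ p q, A p q = A q p := by
    intro p q
    have h2 := congrFun (congrFun hA q) p
    rw [Matrix.transpose_apply] at h2
    exact h2
  constructor
  · intro h
    -- a₁ real
    have h00 := h 0 (zero_mem_ball N) 0 (zero_mem_ball N)
    simp only [Pi.zero_apply, zero_mul, Finset.sum_const_zero, sub_zero, one_zpow,
      mul_one, map_zero, mul_zero, map_mul, map_one] at h00
    have ha1 : a₁.im = 0 := by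
      have : conj a₁ = a₁ := h00.symm
      rwa [Complex.conj_eq_iff_im] at this
    have hc1 : conj a₁ = a₁ := Complex.conj_eq_iff_im.mpr ha1
    -- a₀ real
    have ha0 : ∀ j, (a₀ j).im = 0 := by
      intro i
      have key : (-(a₀ i)) = (-(conj (a₀ i))) := by
        apply key_lin N hN 1 _ _ one_ne_zero
        intro t ht0 ht1
        have hz := single_mem_ball N i t ht0 (by linarith)
        have hh := h _ hz 0 (zero_mem_ball N)
        simp only [Pi.zero_apply, map_zero, mul_zero, Finset.sum_const_zero, sub_zero,
          one_zpow, mul_one, Matrix.mulVec_zero, div_one, map_mul, map_one,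
          Pi.single_apply, ite_mul, zero_mul, Finset.sum_ite_eq', Finset.mem_univ,
          if_true] at hh
        rw [hc1] at hh
        have hh2 := mul_left_cancel₀ ha₁ hh
        have hh3 := zpow_eqN N hh2
        calc (1 + -(a₀ i) * (t:ℂ)) ^ N = (1 - (t:ℂ) * a₀ i) ^ N := by ring_nf
          _ = (1 - (t:ℂ) * conj (a₀ i)) ^ N := hh3
          _ = (1 + -(conj (a₀ i)) * (t:ℂ)) ^ N := by ring_nf
      have : conj (a₀ i) = a₀ i := by
        have := neg_injective key; exact this.symm
      rwa [Complex.conj_eq_iff_im] at this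
    have hc0 : ∀ j, conj (a₀ j) = a₀ j := fun j => Complex.conj_eq_iff_im.mpr (ha0 j)
    refine ⟨ha1, ha0, ?_⟩
    -- A real
    have hnorm : ∀ m, ‖a₀ m‖ < 1 := by
      intro m
      have hs0 : (0:ℝ) ≤ ∑ k, ‖a₀ k‖ ^ 2 := Finset.sum_nonneg fun k _ => by positivity
      have h1 : ∑ k, ‖a₀ k‖ ^ 2 < 1 := by
        nlinarith [Real.sq_sqrt hs0, Real.sqrt_nonneg (∑ k, ‖a₀ k‖ ^ 2)]
      have h2 : ‖a₀ m‖ ^ 2 ≤ ∑ k, ‖a₀ k‖ ^ 2 :=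
        Finset.single_le_sum (f := fun k => ‖a₀ k‖ ^ 2) (fun k _ => by positivity)
          (Finset.mem_univ m)
      nlinarith [norm_nonneg (a₀ m)]
    have hne2 : ∀ (r : ℝ) (m : Fin N), 0 < r → r < 1 → (1:ℂ) - (r:ℂ) * a₀ m ≠ 0 := by
      intro r m hr0 hr1 hcon
      rw [sub_eq_zero] at hcon
      have hnn := congrArg Norm.norm hcon
      simp only [norm_one, norm_mul, Complex.norm_real, Real.norm_eq_abs] at hnn
      nlinarith [hnorm m, norm_nonneg (a₀ m), abs_of_pos hr0]
    intro i j
    have hp' : (1:ℂ) - ((1/2:ℝ):ℂ) * a₀ j ≠ 0 := hne2 (1/2) j (by norm_num) (by norm_num)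
    have hkey : (-(a₀ i) + A i j * ((1/2:ℝ):ℂ)) = (-(a₀ i) + conj (A j i) * ((1/2:ℝ):ℂ)) := by
      apply key_lin N hN ((1:ℂ) - ((1/2:ℝ):ℂ) * a₀ j) _ _ hp'
      intro u hu0 hu1
      have hz := single_mem_ball N j (1/2) (by norm_num) (by norm_num)
      have hw := single_mem_ball N i u hu0 (by linarith)
      have hh := h _ hz _ hw
      simp only [Pi.single_apply, apply_ite (starRingEnd ℂ), map_zero, ite_mul, zero_mul,
        mul_ite, mul_zero, Finset.sum_ite_eq', Finset.mem_univ, if_true, Matrix.mulVec_single, Pi.smul_apply, Matrix.col_apply, op_smul_eq_mul,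
        map_mul, map_zpow₀, map_div₀, map_sub, map_one, Complex.conj_ofReal, hc0, hc1] at hh
      have h2j : (2:ℂ) - a₀ j ≠ 0 := by
        intro hcon; apply hp'; push_cast; linear_combination hcon / 2
      have hswne : (1:ℂ) - (u:ℂ) * a₀ i ≠ 0 := hne2 u i hu0 (by linarith)
      have e1 : (1:ℂ) - (a₀ i - A i j * ((1/2:ℝ):ℂ)) / (1 - ((1/2:ℝ):ℂ) * a₀ j) * (u:ℂ)
          = ((1 - ((1/2:ℝ):ℂ) * a₀ j) - (a₀ i - A i j * ((1/2:ℝ):ℂ)) * (u:ℂ))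
            / (1 - ((1/2:ℝ):ℂ) * a₀ j) := by
        field_simp [h2j]
      have e2 : (1:ℂ) - ((1/2:ℝ):ℂ) * ((a₀ j - conj (A j i) * (u:ℂ)) / (1 - (u:ℂ) * a₀ i))
          = ((1 - (u:ℂ) * a₀ i) - ((1/2:ℝ):ℂ) * (a₀ j - conj (A j i) * (u:ℂ)))
            / (1 - (u:ℂ) * a₀ i) := by
        field_simp
      rw [e1, e2, mul_assoc, mul_assoc, reduce N _ hp', reduce N _ hswne] at hh
      have hh2 := mul_left_cancel₀ ha₁ hh
      have hh3 := zpow_eqN N hh2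
      calc ((1:ℂ) - ((1/2:ℝ):ℂ) * a₀ j + (-(a₀ i) + A i j * ((1/2:ℝ):ℂ)) * (u:ℂ)) ^ N
          = ((1 - ((1/2:ℝ):ℂ) * a₀ j) - (a₀ i - A i j * ((1/2:ℝ):ℂ)) * (u:ℂ)) ^ N := by
            ring_nf
        _ = ((1 - (u:ℂ) * a₀ i) - ((1/2:ℝ):ℂ) * (a₀ j - conj (A j i) * (u:ℂ))) ^ N := hh3
        _ = ((1:ℂ) - ((1/2:ℝ):ℂ) * a₀ j + (-(a₀ i) + conj (A j i) * ((1/2:ℝ):ℂ)) * (u:ℂ)) ^ N := by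
            ring_nf
    have h2 := add_left_cancel hkey
    have h3 := mul_right_cancel₀ (by norm_num : ((1/2:ℝ):ℂ) ≠ 0) h2
    rw [hsym j i] at h3
    exact Complex.conj_eq_iff_im.mp h3.symm
  · rintro ⟨ha1, ha0, hA0⟩ z hz w hw
    have hc1 : conj a₁ = a₁ := Complex.conj_eq_iff_im.mpr ha1
    have hc0 : ∀ m, conj (a₀ m) = a₀ m := fun m => Complex.conj_eq_iff_im.mpr (ha0 m)
    have hcA : ∀ p q, conj (A p q) = A p q := fun p q => Complex.conj_eq_iff_im.mpr (hA0 p q)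
    have hsz : (1:ℂ) - ∑ m, z m * a₀ m ≠ 0 := one_sub_ne N a₀ ha₀ hz
    have hsw : (1:ℂ) - ∑ m, w m * a₀ m ≠ 0 := one_sub_ne N a₀ ha₀ hw
    have e1 : ∀ (s : ℂ), s ≠ 0 → ∀ (f g : Fin N → ℂ),
        (1 - ∑ j, f j / s * g j) = (s - ∑ j, f j * g j) / s := by
      intro s hs f g
      rw [sub_div, div_self hs, Finset.sum_div]
      exact congrArg _ (Finset.sum_congr rfl fun j _ => (div_mul_eq_mul_div _ _ _))
    have e2 : ∀ (s : ℂ), s ≠ 0 → ∀ (f g : Fin N → ℂ),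
        (1 - ∑ j, g j * (f j / s)) = (s - ∑ j, g j * f j) / s := by
      intro s hs f g
      rw [sub_div, div_self hs, Finset.sum_div]
      refine congrArg _ (Finset.sum_congr rfl fun j _ => ?_)
      rw [mul_div_assoc]
    have hconjsw : conj ((1:ℂ) - ∑ m, w m * a₀ m) = 1 - ∑ m, conj (w m) * a₀ m := by
      rw [map_sub, map_one, map_sum]
      simp only [map_mul, hc0]
    have hcswne : (1:ℂ) - ∑ m, conj (w m) * a₀ m ≠ 0 := by
      rw [← hconjsw]
      intro hcon
      exact hsw (by simpa using congrArg (starRingEnd ℂ) hcon)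
    have hq : ∀ j, conj ((a₀ j - A.mulVec w j) / (1 - ∑ m, w m * a₀ m))
        = (a₀ j - ∑ m, A j m * conj (w m)) / (1 - ∑ m, conj (w m) * a₀ m) := by
      intro j
      rw [map_div₀, hconjsw, map_sub, hc0]
      congr 2
      simp only [Matrix.mulVec, dotProduct, map_sum, map_mul, hcA]
    have L : (a₁ * (1 - ∑ j, z j * a₀ j) ^ (-(N : ℤ))) *
        (1 - ∑ j, (a₀ j - A.mulVec z j) / (1 - ∑ m, z m * a₀ m) * conj (w j)) ^ (-(N : ℤ))
        = a₁ * ((1 - ∑ m, z m * a₀ m) - ∑ j, (a₀ j - A.mulVec z j) * conj (w j)) ^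
            (-(N : ℤ)) := by
      rw [e1 _ hsz (fun j => a₀ j - A.mulVec z j) (fun j => conj (w j)), mul_assoc,
        reduce N _ hsz]
    have R : conj (a₁ * (1 - ∑ j, w j * a₀ j) ^ (-(N : ℤ))) *
        (1 - ∑ j, z j * conj ((a₀ j - A.mulVec w j) / (1 - ∑ m, w m * a₀ m))) ^ (-(N : ℤ))
        = a₁ * ((1 - ∑ m, conj (w m) * a₀ m)
            - ∑ j, z j * (a₀ j - ∑ m, A j m * conj (w m))) ^ (-(N : ℤ)) := by
      rw [map_mul, hc1, map_zpow₀, hconjsw]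
      simp only [hq]
      rw [e2 _ hcswne (fun j => a₀ j - ∑ m, A j m * conj (w m)) (fun j => z j), mul_assoc,
        reduce N _ hcswne]
    rw [L, R]
    congr 2
    have hT : ∑ j, (∑ m, A j m * z m) * conj (w j)
        = ∑ j, z j * ∑ m, A j m * conj (w m) := by
      simp only [Finset.sum_mul, Finset.mul_sum]
      rw [Finset.sum_comm]
      exact Finset.sum_congr rfl fun m _ => Finset.sum_congr rfl fun j _ => by
        rw [hsym j m]; ring
    have hac : ∑ j, a₀ j * conj (w j) = ∑ j, conj (w j) * a₀ j :=
      Finset.sum_congr rfl fun j _ => mul_comm _ _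
    simp only [Matrix.mulVec, dotProduct, sub_mul, mul_sub,
      Finset.sum_sub_distrib]
    linear_combination hT - hac
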